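/- Fix $1\le k\le n/2$. For $1\le j\le k+1$ let $X_{j,k}\subseteq Gr_k(\mathbb{H}^n)$ be the set of $k$-planes spanned by the columns of a matrix whose $j$-th row is $(1,0,\ldots,0)$ and whose first column vanishes outside the $j$-th entry (i.e., the image of $Gr_{k-1}(\mathbb{H}^{n-1})$ under the displayed embedding). Then $\{Gr_k(\mathbb{H}^n)\setminus X_{j,k} \mid 1\le j\le k+1\}$ is an open cover of $Gr_k(\mathbb{H}^n)$; equivalently, $X_{1,k}\cap\cdots\cap X_{k+1,k}=\emptyset$ and each $X_{j,k}$ is closed. -/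

import Mathlib

open scoped Quaternion

noncomputable section

/-- The compact symplectic group `Sp(n) = {g ∈ SL(n, ℍ) | g gᴴ = 1}`, realized as the
unitary group of the quaternionic matrix algebra (the reduced norm one condition is
automatic for quaternionic unitary matrices). -/
abbrev Sp (n : ℕ) : Type := ↥(unitary (Matrix (Fin n) (Fin n) ℍ[ℝ]))

/-- The matrix `exp v_k = diag(-I_k, I_{n-k})`. -/
def spDiag (n k : ℕ) : Matrix (Fin n) (Fin n) ℍ[ℝ] :=
  Matrix.diagonal fun i => if (i : ℕ) < k then (-1 : ℍ[ℝ]) else 1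

/-- The conjugacy class `𝒪_k` of `exp v_k = diag(-I_k, I_{n-k})` in `Sp(n)` (note that
`g⁻¹ = star g` at the matrix level for `g ∈ Sp(n)`). -/
def spOrbit (n k : ℕ) : Set (Sp n) :=
  {a | ∃ g : Sp n, a.val = g.val * spDiag n k * star g.val}

/-- Representatives for the quaternionic Grassmannian: `n × k` quaternionic matrices of
rank `k` (viewed as right-linear injections `ℍ^k → ℍ^n`). -/
def grassRep (n k : ℕ) : Set (Matrix (Fin n) (Fin k) ℍ[ℝ]) :=
  {x | Function.Injective x.mulVec}

/-- The equivalence `x ∼ x h`, `h ∈ GL(k, ℍ)`, on rank-`k` matrices. -/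
def grassRel (n k : ℕ) (x y : grassRep n k) : Prop :=
  ∃ h : (Matrix (Fin k) (Fin k) ℍ[ℝ])ˣ, y.val = x.val * h.val

/-- The Grassmannian `Gr_k(ℍ^n)` of `k`-dimensional quaternionic subspaces of `ℍ^n`,
realized as rank-`k` matrices in `M_{n×k}(ℍ)` modulo `GL(k, ℍ)`. -/
abbrev QGrass (n k : ℕ) : Type := Quot (grassRel n k)

/-- The subgroup `Sp(k) × Sp(n-k)` of `Sp(n)`, block-diagonally embedded. -/
def spBlock (n k : ℕ) : Subgroup (Sp n) where
  carrier := {g | ∀ i j : Fin n, ¬(((i : ℕ) < k) ↔ ((j : ℕ) < k)) → g.val i j = 0}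
  one_mem' := by
    intro i j hij
    have hne : i ≠ j := by rintro rfl; exact hij Iff.rfl
    show (1 : Matrix (Fin n) (Fin n) ℍ[ℝ]) i j = 0
    exact Matrix.one_apply_ne hne
  mul_mem' := by
    intro a b ha hb i j hij
    show (a.val * b.val) i j = 0
    rw [Matrix.mul_apply]
    apply Finset.sum_eq_zero
    intro l _
    by_cases hl : ((i : ℕ) < k) ↔ ((l : ℕ) < k)
    · rw [hb l j (by tauto), mul_zero]
    · rw [ha i l hl, zero_mul]
  inv_mem' := by
    intro a ha i j hij
    have : (a⁻¹).val = star a.val := by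
      rw [← Unitary.star_eq_inv]; rfl
    rw [this, Matrix.star_apply, ha j i (by tauto), star_zero]

/-- The embedding `Fin (k+1) → Fin n` of the index set `{1, …, k+1}` of the cover. -/
def coverIdx {n k : ℕ} (hk : 1 ≤ k) (h2k : 2 * k ≤ n) (j : Fin (k + 1)) : Fin n :=
  Fin.castLE (by omega) j

/-- The subset `X_{j,k} ⊆ Gr_k(ℍ^n)`: classes of rank-`k` matrices with a `1` in position
`(j, 1)`, zeros in the rest of row `j` and of column `1`, and an arbitrary element of
`Gr_{k-1}(ℍ^{n-1})` in the remaining entries. -/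
def Xset (n k : ℕ) (hk : 1 ≤ k) (j : Fin n) : Set (QGrass n k) :=
  {P | ∃ x : grassRep n k, Quot.mk (grassRel n k) x = P ∧
    x.val j ⟨0, hk⟩ = 1 ∧
    (∀ i : Fin n, i ≠ j → x.val i ⟨0, hk⟩ = 0) ∧
    (∀ c : Fin k, c ≠ ⟨0, hk⟩ → x.val j c = 0)}

/-- The subset `Y_{j,k} ⊆ Gr_k(ℍ^n)` of `k`-planes whose `j`-th coordinate vanishes:
classes of rank-`k` matrices whose `j`-th row is zero. -/
def Yset (n k : ℕ) (j : Fin n) : Set (QGrass n k) :=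
  {P | ∃ x : grassRep n k, Quot.mk (grassRel n k) x = P ∧ ∀ c : Fin k, x.val j c = 0}

/-- `τ_k` sends `g (exp v_k) g⁻¹` to the span of the first `k` columns of `g`. -/
def IsTau (n k : ℕ) (hkn : k ≤ n) (τ : spOrbit n k → QGrass n k) : Prop :=
  ∀ (a : spOrbit n k) (g : Sp n),
    (a : Sp n).val = g.val * spDiag n k * star g.val →
      ∀ x : grassRep n k, (∀ (i : Fin n) (c : Fin k), x.val i c = g.val i (Fin.castLE hkn c)) →
        τ a = Quot.mk (grassRel n k) x


/-! ### Auxiliary machinery -/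

namespace XAux

open Matrix Function

abbrev ιQ := Module.Free.ChooseBasisIndex ℝ ℍ[ℝ]

def qB : Module.Basis ιQ ℝ ℍ[ℝ] := Module.Free.chooseBasis ℝ ℍ[ℝ]

variable {n k : ℕ}

/-- `mulVec` as an `ℝ`-linear map. -/
def mulVecR (A : Matrix (Fin n) (Fin k) ℍ[ℝ]) : (Fin k → ℍ[ℝ]) →ₗ[ℝ] (Fin n → ℍ[ℝ]) where
  toFun := A.mulVec
  map_add' := A.mulVec_add
  map_smul' r v := A.mulVec_smul r v

def colFam (A : Matrix (Fin n) (Fin k) ℍ[ℝ]) : Fin k × ιQ → (Fin n → ℍ[ℝ]) :=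
  fun p i => A i p.1 * qB p.2

lemma sum_colFam (A : Matrix (Fin n) (Fin k) ℍ[ℝ]) (g : Fin k × ιQ → ℝ) :
    ∑ p : Fin k × ιQ, g p • colFam A p = A.mulVec (fun c => ∑ b : ιQ, g (c, b) • qB b) := by
  funext i
  rw [Fintype.sum_prod_type]
  simp only [Finset.sum_apply, Pi.smul_apply, colFam, Matrix.mulVec, dotProduct,
    Finset.mul_sum, mul_smul_comm]

lemma range_mulVec_eq (A : Matrix (Fin n) (Fin k) ℍ[ℝ]) :
    Set.range A.mulVec = ↑(Submodule.span ℝ (Set.range (colFam A))) := by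
  ext w
  constructor
  · rintro ⟨v, rfl⟩
    rw [SetLike.mem_coe, Submodule.mem_span_range_iff_exists_fun]
    refine ⟨fun p => qB.repr (v p.1) p.2, ?_⟩
    rw [sum_colFam]
    exact congrArg A.mulVec (funext fun c => qB.sum_repr (v c))
  · intro hw
    rw [SetLike.mem_coe, Submodule.mem_span_range_iff_exists_fun] at hw
    obtain ⟨g, hg⟩ := hw
    exact ⟨_, (sum_colFam A g).symm.trans hg⟩

lemma colFam_linearIndependent {A : Matrix (Fin n) (Fin k) ℍ[ℝ]} (hA : Injective A.mulVec) :
    LinearIndependent ℝ (colFam A) := by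
  rw [Fintype.linearIndependent_iff]
  intro g hg p
  rw [sum_colFam] at hg
  have h0 : A.mulVec (fun c => ∑ b : ιQ, g (c, b) • qB b) = A.mulVec 0 := by
    rw [hg, Matrix.mulVec_zero]
  have hc : ∑ b : ιQ, g (p.1, b) • qB b = 0 := congrFun (hA h0) p.1
  exact Fintype.linearIndependent_iff.mp qB.linearIndependent _ hc p.2

def optFam (A : Matrix (Fin n) (Fin k) ℍ[ℝ]) (j : Fin n) : Option (Fin k × ιQ) → (Fin n → ℍ[ℝ]) :=
  fun o => o.elim (Pi.single j 1) (colFam A)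

lemma notMem_range_iff {A : Matrix (Fin n) (Fin k) ℍ[ℝ]} (hA : Injective A.mulVec) (j : Fin n) :
    (Pi.single j 1 : Fin n → ℍ[ℝ]) ∉ Set.range A.mulVec ↔
      LinearIndependent ℝ (optFam A j) := by
  rw [linearIndependent_option]
  have h1 : (optFam A j ∘ (↑) : Fin k × ιQ → (Fin n → ℍ[ℝ])) = colFam A := rfl
  have h2 : optFam A j none = Pi.single j 1 := rfl
  rw [h1, h2, range_mulVec_eq]
  simp [colFam_linearIndependent hA]

/-! ### Elementary units of the matrix ring -/

def permM (σ : Equiv.Perm (Fin k)) : Matrix (Fin k) (Fin k) ℍ[ℝ] :=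
  fun i c => if c = σ i then 1 else 0

lemma permM_mul (σ τ : Equiv.Perm (Fin k)) : permM σ * permM τ = permM (σ.trans τ) := by
  funext i j
  rw [Matrix.mul_apply, Finset.sum_eq_single (σ i)]
  · simp [permM]
    exact if_congr Iff.rfl rfl rfl
  · intro b _ hb
    simp [permM, hb]
  · simp

lemma permM_refl : permM (Equiv.refl (Fin k)) = 1 := by
  funext i j
  simp [permM, Matrix.one_apply, eq_comm]

def permU (σ : Equiv.Perm (Fin k)) : (Matrix (Fin k) (Fin k) ℍ[ℝ])ˣ where
  val := permM σ
  inv := permM σ.symm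
  val_inv := by rw [permM_mul, Equiv.self_trans_symm, permM_refl]
  inv_val := by rw [permM_mul, Equiv.symm_trans_self, permM_refl]

lemma permM_mulVec (σ : Equiv.Perm (Fin k)) (u : Fin k → ℍ[ℝ]) :
    (permM σ).mulVec u = fun i => u (σ i) := by
  funext i
  simp [permM, Matrix.mulVec, dotProduct, ite_mul, one_mul, zero_mul, Finset.sum_ite_eq']

def colM (e0 : Fin k) (w : Fin k → ℍ[ℝ]) : Matrix (Fin k) (Fin k) ℍ[ℝ] :=
  fun i c => if c = e0 then w i else if i = c then 1 else 0

lemma mul_colM_col {m : ℕ} (B : Matrix (Fin m) (Fin k) ℍ[ℝ]) (e0 : Fin k) (w : Fin k → ℍ[ℝ])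
    (i : Fin m) : (B * colM e0 w) i e0 = B.mulVec w i := by
  rw [Matrix.mul_apply]
  simp [colM, Matrix.mulVec, dotProduct]

lemma mul_colM_ne {m : ℕ} (B : Matrix (Fin m) (Fin k) ℍ[ℝ]) (e0 : Fin k) (w : Fin k → ℍ[ℝ])
    (i : Fin m) {c : Fin k} (hc : c ≠ e0) : (B * colM e0 w) i c = B i c := by
  rw [Matrix.mul_apply]
  simp [colM, hc, mul_ite, mul_one, mul_zero, Finset.sum_ite_eq']

lemma colM_mulVec (e0 : Fin k) (w u : Fin k → ℍ[ℝ]) :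
    (colM e0 w).mulVec u = fun i => w i * u e0 + if i = e0 then 0 else u i := by
  funext i
  rw [Matrix.mulVec, dotProduct, ← Finset.sum_erase_add _ _ (Finset.mem_univ e0)]
  have h1 : ∀ l ∈ Finset.univ.erase e0, colM e0 w i l * u l = if i = l then u l else 0 := by
    intro l hl
    rcases Finset.mem_erase.mp hl with ⟨hle, -⟩
    simp [colM, hle, ite_mul, one_mul, zero_mul]
  rw [Finset.sum_congr rfl h1, Finset.sum_ite_eq (Finset.univ.erase e0) i u]
  by_cases hi : i = e0 <;> simp [colM, hi, add_comm]

def colInv (e0 : Fin k) (w : Fin k → ℍ[ℝ]) : Fin k → ℍ[ℝ] :=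
  fun i => if i = e0 then (w e0)⁻¹ else -(w i * (w e0)⁻¹)

lemma colM_mul_colM (e0 : Fin k) (w w' : Fin k → ℍ[ℝ])
    (h : w e0 * w' e0 = 1) (h' : ∀ i, i ≠ e0 → w i * w' e0 + w' i = 0) :
    colM e0 w * colM e0 w' = 1 := by
  funext i c
  by_cases hc : c = e0
  · subst hc
    rw [mul_colM_col, congrFun (colM_mulVec c w w') i]
    by_cases hi : i = c
    · subst hi; simp [Matrix.one_apply, h]
    · rw [if_neg hi, h' i hi, Matrix.one_apply_ne hi]
  · rw [mul_colM_ne _ _ _ _ hc]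
    simp [colM, hc, Matrix.one_apply]

def colU (e0 : Fin k) (w : Fin k → ℍ[ℝ]) (hw : w e0 ≠ 0) : (Matrix (Fin k) (Fin k) ℍ[ℝ])ˣ where
  val := colM e0 w
  inv := colM e0 (colInv e0 w)
  val_inv := colM_mul_colM e0 _ _ (by simp [colInv, mul_inv_cancel₀ hw])
    (fun i hi => by simp [colInv, hi])
  inv_val := colM_mul_colM e0 _ _ (by simp [colInv, inv_mul_cancel₀ hw])
    (fun i hi => by
      simp only [colInv, if_neg hi, if_pos rfl, neg_mul]
      rw [mul_assoc, inv_mul_cancel₀ hw, mul_one, neg_add_cancel])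

def rowM (e0 : Fin k) (r : Fin k → ℍ[ℝ]) : Matrix (Fin k) (Fin k) ℍ[ℝ] :=
  fun i c => (if i = c then 1 else 0) + (if i = e0 then r c else 0)

lemma mul_rowM {m : ℕ} (B : Matrix (Fin m) (Fin k) ℍ[ℝ]) (e0 : Fin k) (r : Fin k → ℍ[ℝ])
    (i : Fin m) (c : Fin k) : (B * rowM e0 r) i c = B i c + B i e0 * r c := by
  rw [Matrix.mul_apply]
  simp only [rowM, mul_add, mul_ite, mul_one, mul_zero, Finset.sum_add_distrib,
    Finset.sum_ite_eq', Finset.mem_univ, if_pos]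

lemma rowM_zero (e0 : Fin k) : rowM e0 (0 : Fin k → ℍ[ℝ]) = 1 := by
  funext i c
  simp [rowM, Matrix.one_apply]

lemma rowM_mul_rowM (e0 : Fin k) (r s : Fin k → ℍ[ℝ]) (hr : r e0 = 0) :
    rowM e0 r * rowM e0 s = rowM e0 (r + s) := by
  funext i c
  rw [mul_rowM]
  have h1 : rowM e0 r i e0 = if i = e0 then 1 else 0 := by
    by_cases hi : i = e0 <;> simp [rowM, hi, hr]
  rw [h1]
  by_cases hi : i = e0 <;> simp [rowM, hi, add_assoc]

def rowU (e0 : Fin k) (r : Fin k → ℍ[ℝ]) (hr : r e0 = 0) : (Matrix (Fin k) (Fin k) ℍ[ℝ])ˣ where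
  val := rowM e0 r
  inv := rowM e0 (-r)
  val_inv := by rw [rowM_mul_rowM e0 r (-r) hr, add_neg_cancel, rowM_zero]
  inv_val := by rw [rowM_mul_rowM e0 (-r) r (by simp [hr]), neg_add_cancel, rowM_zero]

end XAux

namespace XAux

open Matrix Function

variable {n k : ℕ}

lemma grassRel_equivalence (n k : ℕ) : Equivalence (grassRel n k) where
  refl x := ⟨1, by rw [Units.val_one, Matrix.mul_one]⟩
  symm {x y} h := by
    obtain ⟨u, hu⟩ := h
    have huu : u.val * (u⁻¹).val = 1 :=
      u.mul_inv
    exact ⟨u⁻¹, by rw [hu, Matrix.mul_assoc, huu, Matrix.mul_one]⟩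
  trans {x y z} h1 h2 := by
    obtain ⟨u, hu⟩ := h1; obtain ⟨v, hv⟩ := h2
    have huv : (u * v).val = u.val * v.val := rfl
    exact ⟨u * v, by rw [hv, hu, huv, Matrix.mul_assoc]⟩

lemma quot_mk_eq_iff (x y : grassRep n k) :
    Quot.mk (grassRel n k) x = Quot.mk (grassRel n k) y ↔ grassRel n k x y := by
  rw [Quot.eq]
  exact (grassRel_equivalence n k).eqvGen_iff

lemma mem_Xset_iff (n k : ℕ) (hk : 1 ≤ k) (j : Fin n) (x : grassRep n k) :
    Quot.mk (grassRel n k) x ∈ Xset n k hk j ↔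
      (Pi.single j 1 : Fin n → ℍ[ℝ]) ∈ Set.range x.val.mulVec := by
  constructor
  · rintro ⟨y, hy, h1, h2, h3⟩
    obtain ⟨u, hu⟩ := (quot_mk_eq_iff y x).mp hy
    have hy1 : y.val.mulVec (Pi.single ⟨0, hk⟩ 1) = Pi.single j 1 := by
      rw [Matrix.mulVec_single]
      funext i
      by_cases hij : i = j
      · subst hij; simp [h1]
      · simp [h2 i hij, Pi.single_eq_of_ne hij]
    have huu : u.val * (u⁻¹).val = 1 :=
      u.mul_inv
    have hxy : y.val = x.val * (u⁻¹).val := by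
      rw [hu, Matrix.mul_assoc, huu, Matrix.mul_one]
    refine ⟨(u⁻¹).val.mulVec (Pi.single ⟨0, hk⟩ 1), ?_⟩
    rw [Matrix.mulVec_mulVec, ← hxy, hy1]
  · rintro ⟨v, hv⟩
    have hvne : ∃ c, v c ≠ 0 := by
      by_contra hno
      push_neg at hno
      have h0 : x.val.mulVec v = 0 := by
        funext i
        simp [Matrix.mulVec, dotProduct, hno]
      rw [h0] at hv
      have h1 := congrFun hv j
      simp at h1
    obtain ⟨c, hc⟩ := hvne
    set e0 : Fin k := ⟨0, hk⟩ with he0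
    set σ : Equiv.Perm (Fin k) := Equiv.swap e0 c with hσ
    set u0 : Fin k → ℍ[ℝ] := v ∘ σ with hu0def
    have hu0 : u0 e0 ≠ 0 := by
      have h : σ e0 = c := Equiv.swap_apply_left e0 c
      simpa [hu0def, h] using hc
    set B1 := x.val * permM σ with hB1
    have hB1v : B1.mulVec u0 = Pi.single j 1 := by
      rw [hB1, ← Matrix.mulVec_mulVec, permM_mulVec]
      have h : (fun i => u0 (σ i)) = v := by
        funext i
        simp [hu0def, hσ, Equiv.swap_apply_self]
      rw [h, hv]
    set B2 := B1 * colM e0 u0 with hB2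
    have hB2col : ∀ i, B2 i e0 = (Pi.single j 1 : Fin n → ℍ[ℝ]) i := by
      intro i
      rw [hB2, mul_colM_col, hB1v]
    set r : Fin k → ℍ[ℝ] := fun c' => if c' = e0 then 0 else -(B2 j c') with hrdef
    have hre : r e0 = 0 := by simp [hrdef]
    set B3 := B2 * rowM e0 r with hB3
    have hB3col : ∀ i, B3 i e0 = (Pi.single j 1 : Fin n → ℍ[ℝ]) i := by
      intro i
      rw [hB3, mul_rowM, hre, mul_zero, add_zero]
      exact hB2col i
    have hB3row : ∀ c', c' ≠ e0 → B3 j c' = 0 := by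
      intro c' hc'
      rw [hB3, mul_rowM]
      have hb : B2 j e0 = 1 := by rw [hB2col j, Pi.single_eq_same]
      rw [hb, one_mul, hrdef]
      simp [hc']
    set U : (Matrix (Fin k) (Fin k) ℍ[ℝ])ˣ := permU σ * colU e0 u0 hu0 * rowU e0 r hre with hU
    have hUval : U.val = permM σ * colM e0 u0 * rowM e0 r := rfl
    have hB3U : B3 = x.val * U.val := by
      rw [hB3, hB2, hB1, hUval, Matrix.mul_assoc x.val (permM σ) (colM e0 u0),
        Matrix.mul_assoc x.val (permM σ * colM e0 u0) (rowM e0 r)]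
    have hUinj : Function.Injective U.val.mulVec := by
      intro a b hab
      have hUU : (U⁻¹).val * U.val = 1 :=
        U.inv_mul
      have h := congrArg ((U⁻¹).val.mulVec) hab
      rwa [Matrix.mulVec_mulVec, Matrix.mulVec_mulVec, hUU, Matrix.one_mulVec,
        Matrix.one_mulVec] at h
    have hinj : Function.Injective B3.mulVec := by
      rw [hB3U]
      intro a b hab
      rw [← Matrix.mulVec_mulVec, ← Matrix.mulVec_mulVec] at hab
      exact hUinj (x.2 hab)
    refine ⟨⟨B3, hinj⟩, ?_, ?_, ?_, ?_⟩
    · exact ((quot_mk_eq_iff x ⟨B3, hinj⟩).mpr ⟨U, hB3U⟩).symm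
    · exact (hB3col j).trans (Pi.single_eq_same j 1)
    · intro i hij
      show B3 i e0 = 0
      rw [hB3col i]
      exact Pi.single_eq_of_ne hij 1
    · exact fun c' hc' => hB3row c' hc'

end XAux

namespace XAux

open Matrix Function

variable {n k : ℕ}

lemma Xset_preimage (n k : ℕ) (hk : 1 ≤ k) (j : Fin n) :
    Quot.mk (grassRel n k) ⁻¹' (Xset n k hk j) =
      {x : grassRep n k | (Pi.single j 1 : Fin n → ℍ[ℝ]) ∈ Set.range x.val.mulVec} :=
  Set.ext fun x => mem_Xset_iff n k hk j x

lemma isOpen_compl_Xset (n k : ℕ) (hk : 1 ≤ k) (j : Fin n) :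
    IsOpen (Xset n k hk j)ᶜ := by
  rw [← (isQuotientMap_quot_mk (r := grassRel n k)).isOpen_preimage, Set.preimage_compl,
    Xset_preimage]
  have hset : ({x : grassRep n k |
        (Pi.single j 1 : Fin n → ℍ[ℝ]) ∈ Set.range x.val.mulVec})ᶜ =
      Subtype.val ⁻¹' {A : Matrix (Fin n) (Fin k) ℍ[ℝ] | LinearIndependent ℝ (optFam A j)} := by
    ext x
    simp only [Set.mem_compl_iff, Set.mem_setOf_eq, Set.mem_preimage]
    exact notMem_range_iff x.2 j
  rw [hset]
  have hcont : Continuous fun A : Matrix (Fin n) (Fin k) ℍ[ℝ] => optFam A j := by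
    apply continuous_pi
    intro o
    cases o with
    | none => exact continuous_const
    | some p =>
      apply continuous_pi
      intro i
      exact (Continuous.matrix_elem continuous_id i p.1).mul continuous_const
  exact (isOpen_setOf_linearIndependent.preimage hcont).preimage continuous_subtype_val

lemma mulVec_mul_right (A : Matrix (Fin n) (Fin k) ℍ[ℝ]) (v : Fin k → ℍ[ℝ]) (q : ℍ[ℝ]) :
    A.mulVec (fun c => v c * q) = fun i => A.mulVec v i * q := by
  funext i
  simp [Matrix.mulVec, dotProduct, Finset.sum_mul, mul_assoc]

lemma inter_Xset_empty (n k : ℕ) (hk : 1 ≤ k) (h2k : 2 * k ≤ n) :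
    (⋂ j : Fin (k + 1), Xset n k hk (coverIdx hk h2k j)) = ∅ := by
  rw [Set.eq_empty_iff_forall_notMem]
  intro P hP
  obtain ⟨x, rfl⟩ := Quot.exists_rep P
  rw [Set.mem_iInter] at hP
  have hmem : ∀ jj : Fin (k + 1),
      (Pi.single (coverIdx hk h2k jj) 1 : Fin n → ℍ[ℝ]) ∈ Set.range x.val.mulVec :=
    fun jj => (mem_Xset_iff n k hk _ x).mp (hP jj)
  set G : Fin (k + 1) × ιQ → (Fin n → ℍ[ℝ]) :=
    fun p => Pi.single (coverIdx hk h2k p.1) (qB p.2) with hG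
  -- each `G p` lies in the range of `mulVec`
  have hGmem : ∀ p, G p ∈ Set.range x.val.mulVec := by
    rintro ⟨jj, b⟩
    obtain ⟨v, hv⟩ := hmem jj
    refine ⟨fun c => v c * qB b, ?_⟩
    rw [mulVec_mul_right, hv]
    funext i
    by_cases hij : i = coverIdx hk h2k jj
    · subst hij; simp [hG]
    · simp [hG, Pi.single_eq_of_ne hij]
  -- `G` is linearly independent
  have hGind : LinearIndependent ℝ G := by
    have hb := (Pi.basis (fun _ : Fin n => qB)).linearIndependent
    have hinj : Function.Injective
        (fun p : Fin (k + 1) × ιQ => (⟨coverIdx hk h2k p.1, p.2⟩ : Σ _ : Fin n, ιQ)) := by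
      rintro ⟨p1, p2⟩ ⟨q1, q2⟩ hpq
      have h1 : coverIdx hk h2k p1 = coverIdx hk h2k q1 := congrArg Sigma.fst hpq
      have e1 : p1 = q1 := Fin.castLE_injective _ h1
      subst e1
      have hpq' : (⟨coverIdx hk h2k p1, p2⟩ : Σ _ : Fin n, ιQ) = ⟨coverIdx hk h2k p1, q2⟩ := hpq
      have h2 : p2 = q2 := eq_of_heq (Sigma.ext_iff.mp hpq').2
      subst h2
      rfl
    have hcomp := hb.comp _ hinj
    have hGeq : G = (Pi.basis (fun _ : Fin n => qB)) ∘
        (fun p : Fin (k + 1) × ιQ => (⟨coverIdx hk h2k p.1, p.2⟩ : Σ _ : Fin n, ιQ)) := by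
      funext p
      simp [hG, Pi.basis_apply]
    rw [hGeq]
    exact hcomp
  -- dimension count
  have hspan_eq : Submodule.span ℝ (Set.range (colFam x.val)) = LinearMap.range (mulVecR x.val) := by
    apply SetLike.coe_injective
    rw [LinearMap.coe_range]
    exact (range_mulVec_eq x.val).symm
  have hle1 : Submodule.span ℝ (Set.range G) ≤ LinearMap.range (mulVecR x.val) := by
    rw [← hspan_eq]
    apply Submodule.span_le.mpr
    rintro _ ⟨p, rfl⟩
    have := hGmem p
    rw [range_mulVec_eq x.val] at this
    exact this
  have h1 : Module.finrank ℝ (Submodule.span ℝ (Set.range G)) = Fintype.card (Fin (k + 1) × ιQ) :=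
    finrank_span_eq_card hGind
  have hmono := Submodule.finrank_mono hle1
  have h2 := LinearMap.finrank_range_le (mulVecR x.val)
  have hdom : Module.finrank ℝ (Fin k → ℍ[ℝ]) = k * Fintype.card ιQ := by
    rw [Module.finrank_pi_fintype ℝ]
    simp [Module.finrank_eq_card_chooseBasisIndex ℝ ℍ[ℝ], Finset.sum_const, Finset.card_univ]
  have hd : 0 < Fintype.card ιQ := by
    rw [← Module.finrank_eq_card_chooseBasisIndex ℝ ℍ[ℝ]]
    exact Module.finrank_pos
  have hcard : Fintype.card (Fin (k + 1) × ιQ) = (k + 1) * Fintype.card ιQ := by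
    simp [Fintype.card_prod]
  have hchain : (k + 1) * Fintype.card ιQ ≤ k * Fintype.card ιQ := by
    rw [← hcard, ← h1, ← hdom]
    exact le_trans hmono h2
  rw [Nat.succ_mul] at hchain
  omega

end XAux

/-!
STATEMENT 12: Fix `1 ≤ k ≤ n/2`.  For `1 ≤ j ≤ k+1` let `X_{j,k} ⊆ Gr_k(ℍ^n)` be the set
of `k`-planes spanned by the columns of a matrix whose `j`-th row is `(1, 0, …, 0)` and
whose first column vanishes outside the `j`-th entry.  Then
`{Gr_k(ℍ^n) \\ X_{j,k} | 1 ≤ j ≤ k+1}` is an open cover of `Gr_k(ℍ^n)`; equivalently,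
`X_{1,k} ∩ ⋯ ∩ X_{k+1,k} = ∅` and each `X_{j,k}` is closed.
-/
theorem Xset_complements_open_cover (n k : ℕ) (hk : 1 ≤ k) (h2k : 2 * k ≤ n) :
    (∀ j : Fin (k + 1), IsOpen (Xset n k hk (coverIdx hk h2k j))ᶜ) ∧
    (⋃ j : Fin (k + 1), (Xset n k hk (coverIdx hk h2k j))ᶜ) = Set.univ ∧
    (∀ j : Fin (k + 1), IsClosed (Xset n k hk (coverIdx hk h2k j))) ∧
    (⋂ j : Fin (k + 1), Xset n k hk (coverIdx hk h2k j)) = ∅ := by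
  have hopen : ∀ j : Fin (k + 1), IsOpen (Xset n k hk (coverIdx hk h2k j))ᶜ :=
    fun j => XAux.isOpen_compl_Xset n k hk (coverIdx hk h2k j)
  have hempty := XAux.inter_Xset_empty n k hk h2k
  refine ⟨hopen, ?_, fun j => isOpen_compl_iff.mp (hopen j), hempty⟩
  rw [← Set.compl_iInter, hempty, Set.compl_empty]
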